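/- Let z̄ = (x̄,ȳ) be a KKT pair (F(z̄) = 0), let p, q be the positive and negative inertia indices of G(z̄) (so z̄ ∈ M̃_{p,q}), and assume the W-SOC and the SRCQ hold at z̄. Define J(Δ) := (∇g(x̄)Δ, Π_+(Δ)) ∈ ℝ^m × S^n for Δ ∈ N_{G(z̄)}M_{p,q}. Then J is positively homogeneous (J(tΔ) = t·J(Δ) for all t ≥ 0), and there exist constants 0 < c₁ < c₂ such that c₁‖Δ‖ ≤ ‖J(Δ)‖ ≤ c₂‖Δ‖ for all Δ ∈ N_{G(z̄)}M_{p,q}. -/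

import Mathlib

open scoped Classical RealInnerProductSpace
open Matrix Set

noncomputable section

abbrev Mat (n : ℕ) : Type := Matrix (Fin n) (Fin n) ℝ

abbrev Em (m : ℕ) : Type := EuclideanSpace ℝ (Fin m)

attribute [instance] Matrix.frobeniusNormedAddCommGroup Matrix.frobeniusNormedSpace

/-- The trace (Frobenius) inner product `⟨A,B⟩ = tr(AᵀB)` on matrices; for symmetric
matrices this is `tr(AB)`. -/
def minner {n : ℕ} (A B : Mat n) : ℝ := (Aᵀ * B).trace

/-- `P` is an orthogonal matrix. -/
def IsOrthoMat {n : ℕ} (P : Mat n) : Prop := P * Pᵀ = 1 ∧ Pᵀ * P = 1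

/-- `(P, lam)` is an eigenvalue decomposition of `A` with orthogonal `P` and
nonincreasing eigenvalue vector `lam`: `A = P·Diag(lam)·Pᵀ`. -/
def IsEigDecomp {n : ℕ} (A P : Mat n) (lam : Fin n → ℝ) : Prop :=
  IsOrthoMat P ∧ Antitone lam ∧ A = P * Matrix.diagonal lam * Pᵀ

/-- The stratum `M_{p,q}` of symmetric matrices with exactly `p` positive and `q` negative
eigenvalues. -/
def stratum (n p q : ℕ) : Set (Mat n) :=
  {A | ∃ P lam, IsEigDecomp A P lam ∧
    {i : Fin n | 0 < lam i}.ncard = p ∧ {i : Fin n | lam i < 0}.ncard = q}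

/-- The metric projection `Π₊` onto the positive semidefinite cone (defined through an
eigenvalue decomposition; the value is independent of the choice of decomposition). -/
noncomputable def piPlus {n : ℕ} (A : Mat n) : Mat n :=
  if h : ∃ P lam, IsEigDecomp A P lam then
    h.choose * Matrix.diagonal (fun i => max (h.choose_spec.choose i) 0) * h.chooseᵀ
  else 0

variable {m n : ℕ}

/-- `G(z) = g(x) + y`. -/
def Gmap (g : Em m → Mat n) (z : Em m × Mat n) : Mat n := g z.1 + z.2

/-- The adjoint `∇g(x) : Sⁿ → ℝᵐ` of the derivative `g'(x)`, characterized by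
`⟨∇g(x)H, v⟩ = ⟨H, g'(x)v⟩`. -/
def gradg (g : Em m → Mat n) (x : Em m) (H : Mat n) : Em m :=
  (EuclideanSpace.equiv (Fin m) ℝ).symm
    fun k => (Hᵀ * fderiv ℝ g x (EuclideanSpace.single k 1)).trace

/-- The Lagrangian `L(x,y) = f(x) + ⟨y, g(x)⟩`. -/
def Lfun (f : Em m → ℝ) (g : Em m → Mat n) (x : Em m) (y : Mat n) : ℝ :=
  f x + minner y (g x)

/-- The Hessian `∇²ₓₓL(x,y)` of `x ↦ L(x,y)`, as a continuous linear map `ℝᵐ → ℝᵐ`. -/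
def hessL (f : Em m → ℝ) (g : Em m → Mat n) (x : Em m) (y : Mat n) : Em m →L[ℝ] Em m :=
  fderiv ℝ (fun u => gradient (fun w => Lfun f g w y) u) x

/-- The KKT mapping `F(z) = (∇f(x) + ∇g(x)y, −g(x) + Π₊(G(z)))`. -/
def KKTF (f : Em m → ℝ) (g : Em m → Mat n) (z : Em m × Mat n) : Em m × Mat n :=
  (gradient f z.1 + gradg g z.1 z.2, - g z.1 + piPlus (Gmap g z))

/-- The lifted stratum `M̃_{p,q} = {z = (x,y) ∈ ℝᵐ × Sⁿ : G(z) ∈ M_{p,q}}`. -/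
def lstratum (g : Em m → Mat n) (p q : ℕ) : Set (Em m × Mat n) :=
  {z | z.2.IsSymm ∧ Gmap g z ∈ stratum n p q}

/-- The norm `‖(u,H)‖ = sqrt(‖u‖² + ‖H‖²)` on `ℝᵐ × Sⁿ` (Frobenius norm on matrices). -/
def pnorm {m n : ℕ} (w : Em m × Mat n) : ℝ := Real.sqrt (‖w.1‖ ^ 2 + ‖w.2‖ ^ 2)

/-- The weak strict Robinson constraint qualification (W-SRCQ) at `z`:
`g'(x)[ℝᵐ] + {PBPᵀ : B ∈ Sⁿ, B_{βγ} = 0, B_{γγ} = 0} = Sⁿ`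
(for any eigenvalue decomposition `(P, lam)` of `G(z)`; independent of the choice). -/
def WSRCQ (g : Em m → Mat n) (z : Em m × Mat n) : Prop :=
  ∀ P lam, IsEigDecomp (Gmap g z) P lam →
    ∀ C : Mat n, C.IsSymm →
      ∃ (v : Em m) (B : Mat n), B.IsSymm ∧
        (∀ i j, lam i = 0 → lam j < 0 → B i j = 0) ∧
        (∀ i j, lam i < 0 → lam j < 0 → B i j = 0) ∧
        C = fderiv ℝ g z.1 v + P * B * Pᵀ

/-- The constraint nondegeneracy at `z`:
`g'(x)[ℝᵐ] + {PBPᵀ : B ∈ Sⁿ, B_{ββ} = 0, B_{βγ} = 0, B_{γγ} = 0} = Sⁿ`. -/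
def CNondeg (g : Em m → Mat n) (z : Em m × Mat n) : Prop :=
  ∀ P lam, IsEigDecomp (Gmap g z) P lam →
    ∀ C : Mat n, C.IsSymm →
      ∃ (v : Em m) (B : Mat n), B.IsSymm ∧
        (∀ i j, lam i = 0 → lam j = 0 → B i j = 0) ∧
        (∀ i j, lam i = 0 → lam j < 0 → B i j = 0) ∧
        (∀ i j, lam i < 0 → lam j < 0 → B i j = 0) ∧
        C = fderiv ℝ g z.1 v + P * B * Pᵀ

/-- The strict Robinson constraint qualification (SRCQ) at a KKT pair `z`:
`g'(x)[ℝᵐ] + {PBPᵀ : B ∈ Sⁿ, B_{ββ} ⪰ 0, B_{βγ} = 0, B_{γγ} = 0} = Sⁿ`. -/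
def SRCQ (g : Em m → Mat n) (z : Em m × Mat n) : Prop :=
  ∀ P lam, IsEigDecomp (Gmap g z) P lam →
    ∀ C : Mat n, C.IsSymm →
      ∃ (v : Em m) (B : Mat n), B.IsSymm ∧
        (∀ u : Fin n → ℝ, (∀ i, lam i ≠ 0 → u i = 0) →
          0 ≤ ∑ i, ∑ j, u i * B i j * u j) ∧
        (∀ i j, lam i = 0 → lam j < 0 → B i j = 0) ∧
        (∀ i j, lam i < 0 → lam j < 0 → B i j = 0) ∧
        C = fderiv ℝ g z.1 v + P * B * Pᵀ

/-- The quadratic form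
`Q(z,v) = ⟨v, ∇²ₓₓL(x,y)v⟩ + 2·Σ_{i∈α}Σ_{j∈γ} (−λⱼ/λᵢ)·([Pᵀ(g'(x)v)P]_{ij})²`. -/
def Qform (f : Em m → ℝ) (g : Em m → Mat n) (z : Em m × Mat n)
    (P : Mat n) (lam : Fin n → ℝ) (v : Em m) : ℝ :=
  ⟪v, hessL f g z.1 z.2 v⟫ +
    2 * ∑ i : Fin n, ∑ j : Fin n,
      (if 0 < lam i ∧ lam j < 0 then
        (-lam j / lam i) * ((Pᵀ * fderiv ℝ g z.1 v * P) i j) ^ 2 else 0)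

/-- `v ∈ appl(z)`: the blocks `ββ`, `βγ`, `γγ` of `Pᵀ(g'(x)v)P` vanish. -/
def memAppl (g : Em m → Mat n) (z : Em m × Mat n)
    (P : Mat n) (lam : Fin n → ℝ) (v : Em m) : Prop :=
  (∀ i j, lam i = 0 → lam j = 0 → (Pᵀ * fderiv ℝ g z.1 v * P) i j = 0) ∧
  (∀ i j, lam i = 0 → lam j < 0 → (Pᵀ * fderiv ℝ g z.1 v * P) i j = 0) ∧
  (∀ i j, lam i < 0 → lam j < 0 → (Pᵀ * fderiv ℝ g z.1 v * P) i j = 0)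

/-- `v ∈ app(z)`: the blocks `βγ`, `γγ` of `Pᵀ(g'(x)v)P` vanish. -/
def memApp (g : Em m → Mat n) (z : Em m × Mat n)
    (P : Mat n) (lam : Fin n → ℝ) (v : Em m) : Prop :=
  (∀ i j, lam i = 0 → lam j < 0 → (Pᵀ * fderiv ℝ g z.1 v * P) i j = 0) ∧
  (∀ i j, lam i < 0 → lam j < 0 → (Pᵀ * fderiv ℝ g z.1 v * P) i j = 0)

/-- The weak second order condition (W-SOC) at `z`: `Q(z,v) ≠ 0` for every nonzero
`v ∈ appl(z)`. -/
def WSOC (f : Em m → ℝ) (g : Em m → Mat n) (z : Em m × Mat n) : Prop :=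
  ∀ P lam, IsEigDecomp (Gmap g z) P lam →
    ∀ v : Em m, v ≠ 0 → memAppl g z P lam v → Qform f g z P lam v ≠ 0

/-- The strong second order sufficient condition (S-SOSC) at `z`: `Q(z,v) > 0` for every
nonzero `v ∈ app(z)`. -/
def SSOSC (f : Em m → ℝ) (g : Em m → Mat n) (z : Em m × Mat n) : Prop :=
  ∀ P lam, IsEigDecomp (Gmap g z) P lam →
    ∀ v : Em m, v ≠ 0 → memApp g z P lam v → 0 < Qform f g z P lam v

/-- The second order necessary condition (SONC) at `z`. -/
def SONC (f : Em m → ℝ) (g : Em m → Mat n) (z : Em m × Mat n) : Prop :=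
  ∀ P lam, IsEigDecomp (Gmap g z) P lam →
    ∀ v : Em m, v ≠ 0 →
      (∀ u : Fin n → ℝ, (∀ i, lam i ≠ 0 → u i = 0) →
        0 ≤ ∑ i, ∑ j, u i * (Pᵀ * fderiv ℝ g z.1 v * P) i j * u j) →
      memApp g z P lam v → 0 ≤ Qform f g z P lam v

/-- The W-SOC holds uniformly on a set `S`: there is `c > 0` with `Q(z,v) ≥ c‖v‖²` for
every `z ∈ S` (in `ℝᵐ × Sⁿ`) and every `v ∈ appl(z)`. -/
def UnifWSOC (f : Em m → ℝ) (g : Em m → Mat n) (S : Set (Em m × Mat n)) : Prop :=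
  ∃ c : ℝ, 0 < c ∧ ∀ z ∈ S, z.2.IsSymm →
    ∀ P lam, IsEigDecomp (Gmap g z) P lam →
      ∀ v : Em m, memAppl g z P lam v → c * ‖v‖ ^ 2 ≤ Qform f g z P lam v

/-- `H ∈ T_z`: `H ∈ Sⁿ` with `(PᵀHP)_{ββ} = 0`. -/
def memTz {n : ℕ} (P : Mat n) (lam : Fin n → ℝ) (H : Mat n) : Prop :=
  H.IsSymm ∧ ∀ i j, lam i = 0 → lam j = 0 → (Pᵀ * H * P) i j = 0

/-- `Δ ∈ N_{G(z)}M_{p,q}`: `Δ ∈ Sⁿ` and `(PᵀΔP)_{ij} = 0` whenever `i ∉ β` or `j ∉ β`. -/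
def memNormal {n : ℕ} (P : Mat n) (lam : Fin n → ℝ) (Δ : Mat n) : Prop :=
  Δ.IsSymm ∧ ∀ i j, (lam i ≠ 0 ∨ lam j ≠ 0) → (Pᵀ * Δ * P) i j = 0

/-- The map `ξ_z : T_z → Sⁿ`, `ξ_z(H) = P·M·Pᵀ`. -/
def xiMap {n : ℕ} (P : Mat n) (lam : Fin n → ℝ) (H : Mat n) : Mat n :=
  P * (Matrix.of fun i j =>
    if 0 < lam i ∧ 0 < lam j then (Pᵀ * H * P) i j
    else if 0 < lam i ∧ lam j = 0 then (Pᵀ * H * P) i j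
    else if lam i = 0 ∧ 0 < lam j then (Pᵀ * H * P) i j
    else if 0 < lam i ∧ lam j < 0 then (lam i / (lam i - lam j)) * (Pᵀ * H * P) i j
    else if lam i < 0 ∧ 0 < lam j then (lam j / (lam j - lam i)) * (Pᵀ * H * P) i j
    else 0) * Pᵀ

/-- The linear map `𝒜_z(v,H) = (∇²ₓₓL(x,y)v − ∇g(x)(g'(x)v) + ∇g(x)H, −g'(x)v + ξ_z(H))`. -/
def Amap (f : Em m → ℝ) (g : Em m → Mat n) (z : Em m × Mat n)
    (P : Mat n) (lam : Fin n → ℝ) (v : Em m) (H : Mat n) : Em m × Mat n :=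
  (hessL f g z.1 z.2 v - gradg g z.1 (fderiv ℝ g z.1 v) + gradg g z.1 H,
    - fderiv ℝ g z.1 v + xiMap P lam H)

/-- The positive inertia index of `A` is `p`. -/
def posInertiaIs {n : ℕ} (A : Mat n) (p : ℕ) : Prop :=
  ∃ P lam, IsEigDecomp A P lam ∧ {i : Fin n | 0 < lam i}.ncard = p

/-- The negative inertia index of `A` is `q`. -/
def negInertiaIs {n : ℕ} (A : Mat n) (q : ℕ) : Prop :=
  ∃ P lam, IsEigDecomp A P lam ∧ {i : Fin n | lam i < 0}.ncard = q

end
noncomputable section Aux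

variable {n : ℕ}

lemma conjT (A : Mat n) : Aᴴ = Aᵀ := by
  ext i j; simp [Matrix.conjTranspose_apply]

lemma norm_eq_sqrt (A : Mat n) : ‖A‖ = Real.sqrt (∑ i, ∑ j, (A i j)^2) := by
  rw [Matrix.frobenius_norm_def, Real.sqrt_eq_rpow]
  congr 1
  refine Finset.sum_congr rfl fun i _ => Finset.sum_congr rfl fun j _ => ?_
  rw [Real.rpow_two, Real.norm_eq_abs, sq_abs]

lemma sq_norm_eq_trace (A : Mat n) : ‖A‖^2 = (Aᵀ * A).trace := by
  rw [norm_eq_sqrt, Real.sq_sqrt (by positivity)]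
  simp only [Matrix.trace, Matrix.diag, Matrix.mul_apply, Matrix.transpose_apply, sq]
  rw [Finset.sum_comm]

lemma norm_conj {P : Mat n} (hP : IsOrthoMat P) (M : Mat n) : ‖P * M * Pᵀ‖ = ‖M‖ := by
  rw [← Real.sqrt_sq (norm_nonneg (P * M * Pᵀ)), ← Real.sqrt_sq (norm_nonneg M),
    sq_norm_eq_trace, sq_norm_eq_trace]
  congr 1
  have : (P * M * Pᵀ)ᵀ * (P * M * Pᵀ) = P * (Mᵀ * M) * Pᵀ := by
    simp only [Matrix.transpose_mul, Matrix.transpose_transpose]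
    calc Pᵀᵀ * (Mᵀ * Pᵀ) * (P * M * Pᵀ) = P * Mᵀ * ((Pᵀ * P) * (M * Pᵀ)) := by
          simp only [Matrix.transpose_transpose, Matrix.mul_assoc]
      _ = P * (Mᵀ * M) * Pᵀ := by rw [hP.2]; simp only [Matrix.one_mul, Matrix.mul_assoc]
  rw [this, Matrix.trace_mul_cycle, ← Matrix.mul_assoc, hP.2, Matrix.one_mul]

lemma sq_norm_diagonal (v : Fin n → ℝ) : ‖(Matrix.diagonal v : Mat n)‖^2 = ∑ i, (v i)^2 := by
  rw [sq_norm_eq_trace, Matrix.diagonal_transpose, Matrix.diagonal_mul_diagonal,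
    Matrix.trace_diagonal]
  simp [sq]

lemma mulDiagT_apply (P : Mat n) (d : Fin n → ℝ) (i j : Fin n) :
    (P * Matrix.diagonal d * Pᵀ) i j = ∑ k, P i k * d k * P j k := by
  simp [Matrix.mul_apply, Matrix.diagonal, Finset.sum_ite_eq, mul_comm]

lemma exists_spectral (A : Mat n) (hA : A.IsHermitian) :
    ∃ U : Mat n, IsOrthoMat U ∧ A = U * Matrix.diagonal hA.eigenvalues * Uᵀ := by
  refine ⟨(Matrix.IsHermitian.eigenvectorUnitary hA : Mat n), ⟨?_, ?_⟩, ?_⟩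
  · have := (Matrix.IsHermitian.eigenvectorUnitary hA).2
    rw [Matrix.mem_unitaryGroup_iff] at this
    simpa [conjT, Matrix.star_eq_conjTranspose] using this
  · have := (Matrix.IsHermitian.eigenvectorUnitary hA).2
    rw [Matrix.mem_unitaryGroup_iff'] at this
    simpa [conjT, Matrix.star_eq_conjTranspose] using this
  · have h := Matrix.IsHermitian.spectral_theorem hA
    conv_lhs => rw [h]
    rw [Unitary.conjStarAlgAut_apply, Matrix.star_eq_conjTranspose, conjT]
    norm_num [Function.comp]

lemma exists_eigdecomp (A : Mat n) (hA : A.IsSymm) : ∃ P lam, IsEigDecomp A P lam := by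
  have hH : A.IsHermitian := by rw [Matrix.IsHermitian, conjT]; exact hA
  obtain ⟨U, hU, hAU⟩ := exists_spectral A hH
  set ev := hH.eigenvalues with hev
  set σ := Tuple.sort (fun i => -(ev i)) with hσ
  refine ⟨U.submatrix id σ, ev ∘ σ, ⟨⟨?_, ?_⟩, ?_, ?_⟩⟩
  · ext i j
    have h1 : (U.submatrix id σ * (U.submatrix id σ)ᵀ) i j
        = ∑ k, U i (σ k) * U j (σ k) := by
      simp [Matrix.mul_apply, Matrix.submatrix_apply]
    have h2 : (U * Uᵀ) i j = (1 : Mat n) i j := congrFun (congrFun hU.1 i) j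
    rw [h1, Equiv.sum_comp σ (fun k => U i k * U j k)]
    rw [← h2]; simp [Matrix.mul_apply]
  · ext i j
    have h1 : ((U.submatrix id σ)ᵀ * U.submatrix id σ) i j = (Uᵀ * U) (σ i) (σ j) := by
      simp [Matrix.mul_apply, Matrix.submatrix_apply]
    rw [h1, hU.2]
    simp [Matrix.one_apply, σ.injective.eq_iff]
  · intro i j hij
    have := Tuple.monotone_sort (fun i => -(ev i)) hij
    simpa using this
  · ext i j
    rw [mulDiagT_apply]
    have h1 : ∑ k, U.submatrix id σ i k * (ev ∘ σ) k * U.submatrix id σ j k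
        = ∑ k, U i (σ k) * ev (σ k) * U j (σ k) := by
      simp [Matrix.submatrix_apply]
    rw [h1, Equiv.sum_comp σ (fun k => U i k * ev k * U j k), hAU, mulDiagT_apply]

lemma eig_symm {A P : Mat n} {lam : Fin n → ℝ} (h : IsEigDecomp A P lam) : A.IsSymm := by
  rw [Matrix.IsSymm, h.2.2]
  simp only [Matrix.transpose_mul, Matrix.transpose_transpose, Matrix.diagonal_transpose,
    Matrix.mul_assoc]

open scoped MatrixOrder in
lemma half_formula {A P : Mat n} {lam : Fin n → ℝ} (h : IsEigDecomp A P lam)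
    (hpsd : (A * A).PosSemidef) :
    P * Matrix.diagonal (fun i => max (lam i) 0) * Pᵀ = (2⁻¹ : ℝ) • (A + CFC.sqrt (A * A)) := by
  set S := P * Matrix.diagonal (fun i => |lam i|) * Pᵀ with hSdef
  have hSpsd : S.PosSemidef := by
    have hd : Matrix.PosSemidef (Matrix.diagonal (fun i => |lam i|) : Mat n) :=
      Matrix.PosSemidef.diagonal (fun i => abs_nonneg _)
    have := hd.mul_mul_conjTranspose_same P
    rwa [conjT] at this
  have hSsq : S ^ 2 = A * A := by
    rw [pow_two, hSdef, h.2.2]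
    calc (P * Matrix.diagonal (fun i => |lam i|) * Pᵀ) * (P * Matrix.diagonal (fun i => |lam i|) * Pᵀ)
        = P * Matrix.diagonal (fun i => |lam i|) * (Pᵀ * P) * (Matrix.diagonal (fun i => |lam i|) * Pᵀ) := by
          simp only [Matrix.mul_assoc]
      _ = P * (Matrix.diagonal (fun i => |lam i|) * Matrix.diagonal (fun i => |lam i|)) * Pᵀ := by
          rw [h.1.2]; simp only [Matrix.mul_one, Matrix.mul_assoc]
      _ = P * (Matrix.diagonal lam * Matrix.diagonal lam) * Pᵀ := by
          rw [Matrix.diagonal_mul_diagonal, Matrix.diagonal_mul_diagonal]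
          congr 1; · congr 1; funext i; simp [abs_mul_abs_self]
      _ = (P * Matrix.diagonal lam * Pᵀ) * (P * Matrix.diagonal lam * Pᵀ) := by
          rw [show P * Matrix.diagonal lam * Pᵀ * (P * Matrix.diagonal lam * Pᵀ)
              = P * Matrix.diagonal lam * (Pᵀ * P) * (Matrix.diagonal lam * Pᵀ) by
            simp only [Matrix.mul_assoc], h.1.2]
          simp only [Matrix.mul_one, Matrix.mul_assoc]
  have hsqrt : S = CFC.sqrt (A * A) :=
    (CFC.sqrt_unique (b := S) (by rw [← pow_two]; exact hSsq) hSpsd.nonneg).symm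
  have hdiag : (Matrix.diagonal (fun i => max (lam i) 0) : Mat n)
      = (2⁻¹ : ℝ) • (Matrix.diagonal lam + Matrix.diagonal (fun i => |lam i|)) := by
    rw [Matrix.diagonal_add]
    ext i j
    rcases eq_or_ne i j with rfl | hij
    · simp only [Matrix.diagonal_apply_eq, Matrix.smul_apply, smul_eq_mul]
      rcases le_total (lam i) 0 with hl | hl
      · rw [max_eq_right hl, abs_of_nonpos hl]; ring
      · rw [max_eq_left hl, abs_of_nonneg hl]; ring
    · simp [Matrix.diagonal_apply_ne _ hij]
  rw [hdiag, ← hsqrt, hSdef]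
  rw [Matrix.mul_smul, Matrix.smul_mul]
  rw [Matrix.mul_add, Matrix.add_mul, ← h.2.2]

lemma piPlus_eq {A P : Mat n} {lam : Fin n → ℝ} (h : IsEigDecomp A P lam) :
    piPlus A = P * Matrix.diagonal (fun i => max (lam i) 0) * Pᵀ := by
  have hex : ∃ P lam, IsEigDecomp A P lam := ⟨P, lam, h⟩
  have hpsd : (A * A).PosSemidef := by
    have := Matrix.posSemidef_conjTranspose_mul_self A
    rwa [conjT, eig_symm h] at this
  rw [piPlus, dif_pos hex, half_formula hex.choose_spec.choose_spec hpsd, half_formula h hpsd]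

lemma eig_smul {A P : Mat n} {lam : Fin n → ℝ} {t : ℝ} (ht : 0 ≤ t)
    (h : IsEigDecomp A P lam) : IsEigDecomp (t • A) P (fun i => t * lam i) := by
  refine ⟨h.1, fun i j hij => mul_le_mul_of_nonneg_left (h.2.1 hij) ht, ?_⟩
  rw [h.2.2]
  have : (Matrix.diagonal (fun i => t * lam i) : Mat n) = t • Matrix.diagonal lam := by
    ext i j; rcases eq_or_ne i j with rfl | hij
    · simp
    · simp [Matrix.diagonal_apply_ne _ hij]
  rw [this, Matrix.mul_smul, Matrix.smul_mul]

lemma piPlus_smul {A : Mat n} {t : ℝ} (ht : 0 ≤ t) (hA : A.IsSymm) :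
    piPlus (t • A) = t • piPlus A := by
  obtain ⟨Q, mu, h⟩ := exists_eigdecomp A hA
  rw [piPlus_eq (eig_smul ht h), piPlus_eq h]
  have : (Matrix.diagonal (fun i => max (t * mu i) 0) : Mat n)
      = t • Matrix.diagonal (fun i => max (mu i) 0) := by
    have : (fun i => max (t * mu i) 0) = fun i => t * max (mu i) 0 := by
      funext i
      rcases le_total (mu i) 0 with hm | hm
      · rw [max_eq_right hm, max_eq_right (mul_nonpos_of_nonneg_of_nonpos ht hm), mul_zero]
      · rw [max_eq_left hm, max_eq_left (mul_nonneg ht hm)]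
    rw [this]
    ext i j; rcases eq_or_ne i j with rfl | hij
    · simp
    · simp [Matrix.diagonal_apply_ne _ hij]
  rw [this, Matrix.mul_smul, Matrix.smul_mul]

lemma diag_mulVec (mu : Fin n → ℝ) (w : Fin n → ℝ) (k : Fin n) :
    ((Matrix.diagonal mu : Mat n) *ᵥ w) k = mu k * w k := by
  simp [Matrix.mulVec, dotProduct, Matrix.diagonal, Finset.sum_ite_eq]

lemma kernel_pres {Q : Mat n} {mu : Fin n → ℝ} (hQ : IsOrthoMat Q) (f : ℝ → ℝ) (hf : f 0 = 0)
    (v : Fin n → ℝ) (hv : (Q * Matrix.diagonal mu * Qᵀ) *ᵥ v = 0) :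
    (Q * Matrix.diagonal (fun i => f (mu i)) * Qᵀ) *ᵥ v = 0 := by
  have h0 : Matrix.diagonal mu *ᵥ (Qᵀ *ᵥ v) = 0 := by
    have h1 : Qᵀ *ᵥ ((Q * Matrix.diagonal mu * Qᵀ) *ᵥ v) = 0 := by
      rw [hv, Matrix.mulVec_zero]
    rw [Matrix.mulVec_mulVec, show Qᵀ * (Q * Matrix.diagonal mu * Qᵀ)
      = Matrix.diagonal mu * Qᵀ by rw [show Q * Matrix.diagonal mu * Qᵀ
        = Q * (Matrix.diagonal mu * Qᵀ) by rw [Matrix.mul_assoc], ← Matrix.mul_assoc, hQ.2,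
        Matrix.one_mul], ← Matrix.mulVec_mulVec] at h1
    exact h1
  have hcomp : ∀ k, mu k * ((Qᵀ *ᵥ v) k) = 0 := by
    intro k
    have := congrFun h0 k
    rwa [diag_mulVec] at this
  have h2 : Matrix.diagonal (fun i => f (mu i)) *ᵥ (Qᵀ *ᵥ v) = 0 := by
    funext k
    rw [diag_mulVec]
    rcases eq_or_ne (mu k) 0 with hk | hk
    · rw [hk, hf, zero_mul]; rfl
    · have : (Qᵀ *ᵥ v) k = 0 := by
        have := hcomp k
        exact (mul_eq_zero.mp this).resolve_left hk
      rw [this, mul_zero]; rfl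
  calc (Q * Matrix.diagonal (fun i => f (mu i)) * Qᵀ) *ᵥ v
      = Q *ᵥ (Matrix.diagonal (fun i => f (mu i)) *ᵥ (Qᵀ *ᵥ v)) := by
        rw [Matrix.mulVec_mulVec, Matrix.mulVec_mulVec]
    _ = 0 := by rw [h2, Matrix.mulVec_zero]

lemma mul_col (M P : Mat n) (k j : Fin n) :
    (M * P) k j = (M *ᵥ (fun i => P i j)) k := by
  simp [Matrix.mulVec, dotProduct, Matrix.mul_apply]

lemma fpart_symm {Q : Mat n} (mu : Fin n → ℝ) (f : ℝ → ℝ) :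
    (Q * Matrix.diagonal (fun i => f (mu i)) * Qᵀ).IsSymm := by
  rw [Matrix.IsSymm]
  simp only [Matrix.transpose_mul, Matrix.transpose_transpose, Matrix.diagonal_transpose,
    Matrix.mul_assoc]

lemma normal_parts {P : Mat n} {lam : Fin n → ℝ} (hP : IsOrthoMat P)
    {Δ Q : Mat n} {mu : Fin n → ℝ} (hΔ : memNormal P lam Δ) (hQdec : IsEigDecomp Δ Q mu)
    (f : ℝ → ℝ) (hf : f 0 = 0) :
    memNormal P lam (Q * Matrix.diagonal (fun i => f (mu i)) * Qᵀ) := by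
  set E := Q * Matrix.diagonal (fun i => f (mu i)) * Qᵀ with hE
  have hker : ∀ j, lam j ≠ 0 → E *ᵥ (fun i => P i j) = 0 := by
    intro j hj
    have hΔv : Δ *ᵥ (fun i => P i j) = 0 := by
      funext k
      rw [← mul_col Δ P k j]
      have hDP : Δ * P = P * (Pᵀ * Δ * P) := by
        calc Δ * P = (P * Pᵀ) * Δ * P := by rw [hP.1, Matrix.one_mul]
          _ = P * (Pᵀ * Δ * P) := by simp only [Matrix.mul_assoc]
      rw [hDP, Matrix.mul_apply]
      refine Finset.sum_eq_zero fun l _ => ?_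
      rw [hΔ.2 l j (Or.inr hj), mul_zero]
    exact kernel_pres hQdec.1 f hf _ (hQdec.2.2 ▸ hΔv)
  have hcol : ∀ i j, lam j ≠ 0 → (Pᵀ * E * P) i j = 0 := by
    intro i j hj
    have : (Pᵀ * E * P) i j = ∑ k, P k i * ((E *ᵥ fun i => P i j) k) := by
      rw [Matrix.mul_assoc, Matrix.mul_apply]
      refine Finset.sum_congr rfl fun k _ => ?_
      rw [mul_col E P k j, Matrix.transpose_apply]
    rw [this, hker j hj]
    simp
  have hEsymm : E.IsSymm := fpart_symm mu f
  refine ⟨hEsymm, fun i j hij => ?_⟩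
  rcases hij with hi | hj
  · have hts : (Pᵀ * E * P)ᵀ = Pᵀ * E * P := by
      rw [Matrix.transpose_mul, Matrix.transpose_mul, Matrix.transpose_transpose, hEsymm.eq]
      simp only [Matrix.mul_assoc]
    have hsym := congrFun (congrFun hts j) i
    rw [Matrix.transpose_apply] at hsym
    rw [hsym]
    exact hcol j i hi
  · exact hcol i j hj

variable {m : ℕ}

noncomputable def gmapL (g : Em m → Mat n) (x : Em m) : Mat n →ₗ[ℝ] Em m where
  toFun := gradg g x
  map_add' H1 H2 := by
    simp only [gradg]
    rw [← map_add]
    congr 1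
    funext k
    simp [Matrix.transpose_add, Matrix.add_mul]
  map_smul' c H := by
    simp only [gradg, RingHom.id_apply]
    rw [← _root_.map_smul]
    congr 1
    funext k
    simp [Matrix.transpose_smul, Matrix.smul_mul]

lemma gradg_single_decomp (v : Em m) :
    v = ∑ k, (v k) • EuclideanSpace.single k (1 : ℝ) := by
  ext j
  rw [WithLp.ofLp_sum, Finset.sum_apply]
  simp [EuclideanSpace.single_apply]

lemma trace_fderiv_zero (g : Em m → Mat n) (x : Em m) (Ψ : Mat n)
    (h0 : gradg g x Ψ = 0) (v : Em m) :
    (Ψᵀ * fderiv ℝ g x v).trace = 0 := by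
  have hco : ∀ k, (Ψᵀ * fderiv ℝ g x (EuclideanSpace.single k 1)).trace = 0 := by
    intro k
    have := congrArg (fun w => (EuclideanSpace.equiv (Fin m) ℝ) w) h0
    simp only [gradg, ContinuousLinearEquiv.apply_symm_apply, map_zero] at this
    exact congrFun this k
  conv_lhs => rw [gradg_single_decomp v]
  rw [map_sum]
  have hms : ∀ k, fderiv ℝ g x ((v k) • EuclideanSpace.single k (1:ℝ))
      = (v k) • fderiv ℝ g x (EuclideanSpace.single k (1:ℝ)) :=
    fun k => (fderiv ℝ g x).map_smul (v k) _
  simp only [hms]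
  rw [Matrix.mul_sum, Matrix.trace_sum]
  refine Finset.sum_eq_zero fun k _ => ?_
  rw [Matrix.mul_smul, Matrix.trace_smul, hco k, smul_zero]

lemma trace_mul_diag (M : Mat n) (d : Fin n → ℝ) :
    (M * Matrix.diagonal d).trace = ∑ k, M k k * d k := by
  simp [Matrix.trace, Matrix.diag, Matrix.mul_diagonal]

lemma trace_psd_nonneg {lam : Fin n → ℝ} (S B : Mat n) (hS : S.PosSemidef)
    (hsupp : ∀ i j, (lam i ≠ 0 ∨ lam j ≠ 0) → S i j = 0)
    (hB : ∀ u : Fin n → ℝ, (∀ i, lam i ≠ 0 → u i = 0) →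
      0 ≤ ∑ i, ∑ j, u i * B i j * u j) :
    0 ≤ (S * B).trace := by
  obtain ⟨U, hU, hSU⟩ := exists_spectral S hS.1
  set ev := hS.1.eigenvalues with hevdef
  have hev : ∀ i, 0 ≤ ev i := hS.eigenvalues_nonneg
  have htr : (S * B).trace = ∑ k, (Uᵀ * B * U) k k * ev k := by
    rw [hSU]
    rw [show U * Matrix.diagonal ev * Uᵀ * B = U * Matrix.diagonal ev * (Uᵀ * B) by
      rw [Matrix.mul_assoc]]
    rw [Matrix.trace_mul_comm, show Uᵀ * B * (U * Matrix.diagonal ev)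
      = (Uᵀ * B * U) * Matrix.diagonal ev by simp only [Matrix.mul_assoc]]
    rw [trace_mul_diag]
  rw [htr]
  refine Finset.sum_nonneg fun k _ => ?_
  rcases eq_or_ne (ev k) 0 with hk | hk
  · rw [hk, mul_zero]
  · have hu : ∀ i, lam i ≠ 0 → U i k = 0 := by
      intro i hi
      have hSU2 : S * U = U * Matrix.diagonal ev := by
        rw [hSU, show U * Matrix.diagonal ev * Uᵀ * U = U * Matrix.diagonal ev * (Uᵀ * U) by
          rw [Matrix.mul_assoc], hU.2, Matrix.mul_one]
      have hentry := congrFun (congrFun hSU2 i) k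
      rw [Matrix.mul_apply, Matrix.mul_diagonal] at hentry
      have hzero : ∑ j, S i j * U j k = 0 :=
        Finset.sum_eq_zero fun j _ => by rw [hsupp i j (Or.inl hi), zero_mul]
      rw [hzero] at hentry
      exact (mul_eq_zero.mp hentry.symm).resolve_right hk
    have hquad : (Uᵀ * B * U) k k = ∑ i, ∑ j, U i k * B i j * U j k := by
      rw [Matrix.mul_apply]
      rw [Finset.sum_comm]
      refine Finset.sum_congr rfl fun j _ => ?_
      rw [Matrix.mul_apply, Finset.sum_mul]
      refine Finset.sum_congr rfl fun i _ => ?_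
      rw [Matrix.transpose_apply]
    rw [hquad, mul_comm]
    exact mul_nonneg (hev k) (hB _ hu)

lemma srcq_inj (g : Em m → Mat n) (zbar : Em m × Mat n) (hS : SRCQ g zbar)
    (P : Mat n) (lam : Fin n → ℝ) (hdec : IsEigDecomp (Gmap g zbar) P lam)
    (Ψ : Mat n) (hΨ : memNormal P lam Ψ) (hpsd : Ψ.PosSemidef)
    (h0 : gradg g zbar.1 Ψ = 0) : Ψ = 0 := by
  have hnegsymm : (-Ψ).IsSymm := by
    rw [Matrix.IsSymm, Matrix.transpose_neg, hΨ.1.eq]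
  obtain ⟨v, B, hBsymm, hBpos, _, _, hC⟩ := hS P lam hdec (-Ψ) hnegsymm
  have hkey : (Ψᵀ * (-Ψ)).trace
      = (Ψᵀ * fderiv ℝ g zbar.1 v).trace + (Ψᵀ * (P * B * Pᵀ)).trace := by
    rw [hC, Matrix.mul_add, Matrix.trace_add]
  have hlhs : (Ψᵀ * (-Ψ)).trace = -‖Ψ‖^2 := by
    rw [Matrix.mul_neg, Matrix.trace_neg, ← sq_norm_eq_trace]
  have h1 : (Ψᵀ * fderiv ℝ g zbar.1 v).trace = 0 := trace_fderiv_zero g zbar.1 Ψ h0 v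
  have h2 : (Ψᵀ * (P * B * Pᵀ)).trace = ((Pᵀ * Ψ * P) * B).trace := by
    rw [hΨ.1.eq]
    rw [show Ψ * (P * B * Pᵀ) = (Ψ * P * B) * Pᵀ by simp only [Matrix.mul_assoc]]
    rw [Matrix.trace_mul_comm]
    simp only [Matrix.mul_assoc]
  have hSpsd : (Pᵀ * Ψ * P).PosSemidef := by
    have := hpsd.conjTranspose_mul_mul_same P
    rwa [conjT] at this
  have h3 : 0 ≤ ((Pᵀ * Ψ * P) * B).trace :=
    trace_psd_nonneg (lam := lam) _ B hSpsd hΨ.2 hBpos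
  have hfin : -‖Ψ‖^2 ≥ 0 := by
    rw [← hlhs, hkey, h1, zero_add, h2]
    exact h3
  have : ‖Ψ‖ = 0 := by nlinarith [norm_nonneg Ψ]
  exact norm_eq_zero.mp this

noncomputable def entryL (P : Mat n) (i j : Fin n) : Mat n →ₗ[ℝ] ℝ where
  toFun Ψ := (Pᵀ * Ψ * P) i j
  map_add' Ψ1 Ψ2 := by simp [Matrix.mul_add, Matrix.add_mul]
  map_smul' c Ψ := by simp [Matrix.mul_smul, Matrix.smul_mul]

noncomputable def quadL (x : Fin n → ℝ) : Mat n →ₗ[ℝ] ℝ where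
  toFun Ψ := dotProduct x (Ψ *ᵥ x)
  map_add' Ψ1 Ψ2 := by simp [Matrix.add_mulVec, dotProduct_add]
  map_smul' c Ψ := by simp [Matrix.smul_mulVec, dotProduct_smul]

noncomputable def transL : Mat n →ₗ[ℝ] Mat n where
  toFun Ψ := Ψᵀ
  map_add' Ψ1 Ψ2 := Matrix.transpose_add _ _
  map_smul' c Ψ := Matrix.transpose_smul _ _

lemma isClosed_normal_psd (P : Mat n) (lam : Fin n → ℝ) :
    IsClosed {Ψ : Mat n | memNormal P lam Ψ ∧ Ψ.PosSemidef} := by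
  have hset : {Ψ : Mat n | memNormal P lam Ψ ∧ Ψ.PosSemidef}
      = ({Ψ : Mat n | Ψᵀ = Ψ}
        ∩ ⋂ (i : Fin n) (j : Fin n),
            {Ψ : Mat n | (lam i ≠ 0 ∨ lam j ≠ 0) → (Pᵀ * Ψ * P) i j = 0})
        ∩ ⋂ (x : Fin n → ℝ), {Ψ : Mat n | 0 ≤ dotProduct x (Ψ *ᵥ x)} := by
    ext Ψ
    constructor
    · rintro ⟨⟨hsym, hcond⟩, hpsd⟩
      refine ⟨⟨hsym, Set.mem_iInter.mpr fun i => Set.mem_iInter.mpr fun j => hcond i j⟩,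
        Set.mem_iInter.mpr fun x => ?_⟩
      have := hpsd.dotProduct_mulVec_nonneg x
      simpa using this
    · rintro ⟨⟨hsym, hcond⟩, hquad⟩
      refine ⟨⟨hsym, fun i j hij => Set.mem_iInter.mp (Set.mem_iInter.mp hcond i) j hij⟩,
        Matrix.PosSemidef.of_dotProduct_mulVec_nonneg
          (by rw [Matrix.IsHermitian, conjT]; exact hsym) fun x => ?_⟩
      have := Set.mem_iInter.mp hquad x
      simpa using this
  rw [hset]
  refine IsClosed.inter (IsClosed.inter ?_ ?_) ?_
  · exact isClosed_eq (transL (n := n)).continuous_of_finiteDimensional continuous_id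
  · refine isClosed_iInter fun i => isClosed_iInter fun j => ?_
    by_cases h : lam i ≠ 0 ∨ lam j ≠ 0
    · have : {Ψ : Mat n | (lam i ≠ 0 ∨ lam j ≠ 0) → (Pᵀ * Ψ * P) i j = 0}
          = (fun Ψ : Mat n => (Pᵀ * Ψ * P) i j) ⁻¹' {0} := by
        ext Ψ; simp [h]
      rw [this]
      exact IsClosed.preimage (entryL P i j).continuous_of_finiteDimensional isClosed_singleton
    · have : {Ψ : Mat n | (lam i ≠ 0 ∨ lam j ≠ 0) → (Pᵀ * Ψ * P) i j = 0} = Set.univ := by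
        ext Ψ; simp [h]
      rw [this]
      exact isClosed_univ
  · refine isClosed_iInter fun x => ?_
    exact isClosed_le continuous_const (quadL x).continuous_of_finiteDimensional

lemma K_smul {P : Mat n} {lam : Fin n → ℝ} {s : ℝ} (hs : 0 ≤ s) {Ψ : Mat n}
    (hmem : memNormal P lam Ψ) (hpsd : Ψ.PosSemidef) :
    memNormal P lam (s • Ψ) ∧ (s • Ψ).PosSemidef := by
  refine ⟨⟨?_, fun i j hij => ?_⟩, Matrix.PosSemidef.of_dotProduct_mulVec_nonneg ?_ fun x => ?_⟩
  · rw [Matrix.IsSymm, Matrix.transpose_smul, hmem.1.eq]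
  · have : Pᵀ * (s • Ψ) * P = s • (Pᵀ * Ψ * P) := by
      rw [Matrix.mul_smul, Matrix.smul_mul]
    rw [this, Matrix.smul_apply, hmem.2 i j hij, smul_zero]
  · rw [Matrix.IsHermitian, conjT, Matrix.transpose_smul, hmem.1.eq]
  · have h := hpsd.dotProduct_mulVec_nonneg x
    rw [Matrix.smul_mulVec, dotProduct_smul]
    simp only [smul_eq_mul]
    have h' : (0:ℝ) ≤ dotProduct (star x) (Ψ *ᵥ x) := by simpa using h
    simpa using mul_nonneg hs (by simpa using h')

lemma lower_bound_exists (g : Em m → Mat n) (zbar : Em m × Mat n) (hS : SRCQ g zbar)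
    (P : Mat n) (lam : Fin n → ℝ) (hdec : IsEigDecomp (Gmap g zbar) P lam) :
    ∃ c : ℝ, 0 < c ∧ ∀ Ψ : Mat n, memNormal P lam Ψ → Ψ.PosSemidef →
      c * ‖Ψ‖ ≤ ‖gradg g zbar.1 Ψ‖ := by
  classical
  set K := {Ψ : Mat n | memNormal P lam Ψ ∧ Ψ.PosSemidef} with hK
  have hφcont : Continuous fun Ψ : Mat n => ‖gradg g zbar.1 Ψ‖ := by
    have h1 : Continuous fun Ψ : Mat n => gradg g zbar.1 Ψ :=
      (gmapL g zbar.1).continuous_of_finiteDimensional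
    exact h1.norm
  have hSphcomp : IsCompact (Metric.sphere (0 : Mat n) 1 ∩ K) :=
    (isCompact_sphere (0 : Mat n) 1).inter_right (isClosed_normal_psd P lam)
  by_cases hne : (Metric.sphere (0 : Mat n) 1 ∩ K).Nonempty
  · obtain ⟨Ψ₀, hΨ₀mem, hmin⟩ := hSphcomp.exists_isMinOn hne hφcont.continuousOn
    have hΨ₀norm : ‖Ψ₀‖ = 1 := by
      have := hΨ₀mem.1
      rwa [Metric.mem_sphere, dist_zero_right] at this
    have hc : 0 < ‖gradg g zbar.1 Ψ₀‖ := by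
      rw [norm_pos_iff]
      intro h0
      have : Ψ₀ = 0 := srcq_inj g zbar hS P lam hdec Ψ₀ hΨ₀mem.2.1 hΨ₀mem.2.2 h0
      rw [this, norm_zero] at hΨ₀norm
      norm_num at hΨ₀norm
    refine ⟨‖gradg g zbar.1 Ψ₀‖, hc, fun Ψ hmem hpsd => ?_⟩
    rcases eq_or_ne Ψ 0 with rfl | hne0
    · rw [norm_zero, mul_zero]
      exact norm_nonneg _
    · have hn : 0 < ‖Ψ‖ := norm_pos_iff.mpr hne0
      set s := ‖Ψ‖⁻¹ with hsdef
      have hs : 0 < s := inv_pos.mpr hn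
      have hmem' : s • Ψ ∈ Metric.sphere (0 : Mat n) 1 ∩ K := by
        constructor
        · rw [Metric.mem_sphere, dist_zero_right, norm_smul, Real.norm_eq_abs,
            abs_of_pos hs, hsdef, inv_mul_cancel₀ (ne_of_gt hn)]
        · exact K_smul (le_of_lt hs) hmem hpsd
      have hle := isMinOn_iff.mp hmin _ hmem'
      have heq : ‖gradg g zbar.1 (s • Ψ)‖ = s * ‖gradg g zbar.1 Ψ‖ := by
        have : gradg g zbar.1 (s • Ψ) = s • gradg g zbar.1 Ψ :=
          (gmapL g zbar.1).map_smul s Ψ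
        rw [this, norm_smul, Real.norm_eq_abs, abs_of_pos hs]
      rw [heq] at hle
      calc ‖gradg g zbar.1 Ψ₀‖ * ‖Ψ‖ ≤ (s * ‖gradg g zbar.1 Ψ‖) * ‖Ψ‖ :=
            mul_le_mul_of_nonneg_right hle (norm_nonneg _)
        _ = ‖gradg g zbar.1 Ψ‖ := by
            rw [hsdef]; field_simp
  · refine ⟨1, one_pos, fun Ψ hmem hpsd => ?_⟩
    rcases eq_or_ne Ψ 0 with rfl | hne0
    · rw [norm_zero, mul_zero]; exact norm_nonneg _
    · exfalso
      apply hne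
      have hn : 0 < ‖Ψ‖ := norm_pos_iff.mpr hne0
      refine ⟨‖Ψ‖⁻¹ • Ψ, ?_, K_smul (le_of_lt (inv_pos.mpr hn)) hmem hpsd⟩
      rw [Metric.mem_sphere, dist_zero_right, norm_smul, Real.norm_eq_abs,
        abs_of_pos (inv_pos.mpr hn), inv_mul_cancel₀ (ne_of_gt hn)]

lemma gradg_bound (g : Em m → Mat n) (x : Em m) :
    ∃ C : ℝ, 0 ≤ C ∧ ∀ H : Mat n, ‖gradg g x H‖ ≤ C * ‖H‖ := by
  let T := LinearMap.toContinuousLinearMap (gmapL g x)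
  obtain ⟨C, hC, hCb⟩ := SemilinearMapClass.bound_of_continuous (gmapL g x)
    (gmapL g x).continuous_of_finiteDimensional
  exact ⟨C, hC.le, hCb⟩

lemma delta_parts {P : Mat n} {lam : Fin n → ℝ} (hP : IsOrthoMat P) {Δ : Mat n}
    (hΔ : memNormal P lam Δ) :
    ∃ Δm : Mat n, Δ = piPlus Δ - Δm ∧
      memNormal P lam (piPlus Δ) ∧ memNormal P lam Δm ∧ Δm.PosSemidef ∧
      ‖Δ‖^2 = ‖piPlus Δ‖^2 + ‖Δm‖^2 := by
  obtain ⟨Q, mu, hQ⟩ := exists_eigdecomp Δ hΔ.1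
  have hplus : piPlus Δ = Q * Matrix.diagonal (fun i => max (mu i) 0) * Qᵀ := piPlus_eq hQ
  refine ⟨Q * Matrix.diagonal (fun i => max (-(mu i)) 0) * Qᵀ, ?_, ?_, ?_, ?_, ?_⟩
  · rw [hplus, ← Matrix.sub_mul, ← Matrix.mul_sub, Matrix.diagonal_sub]
    have : (fun i => max (mu i) 0 - max (-(mu i)) 0) = mu := by
      funext i
      rcases le_total (mu i) 0 with h | h
      · rw [max_eq_right h, max_eq_left (by linarith)]; ring
      · rw [max_eq_left h, max_eq_right (by linarith)]; ring
    rw [this, ← hQ.2.2]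
  · rw [hplus]
    exact normal_parts hP hΔ hQ (fun a => max a 0) (by simp)
  · exact normal_parts hP hΔ hQ (fun a => max (-a) 0) (by simp)
  · have hd : Matrix.PosSemidef (Matrix.diagonal (fun i => max (-(mu i)) 0) : Mat n) :=
      Matrix.PosSemidef.diagonal (fun i => le_max_right _ _)
    have := hd.mul_mul_conjTranspose_same Q
    rwa [conjT] at this
  · rw [hplus, norm_conj hQ.1, norm_conj hQ.1, hQ.2.2, norm_conj hQ.1,
      sq_norm_diagonal, sq_norm_diagonal, sq_norm_diagonal, ← Finset.sum_add_distrib]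
    refine Finset.sum_congr rfl fun i _ => ?_
    rcases le_total (mu i) 0 with h | h
    · rw [max_eq_right h, max_eq_left (by linarith)]; ring
    · rw [max_eq_left h, max_eq_right (by linarith)]; ring

lemma pnorm_lower1 {m n : ℕ} (u : Em m) (H : Mat n) : ‖u‖ ≤ pnorm (u, H) := by
  have h : pnorm (u, H) = Real.sqrt (‖u‖^2 + ‖H‖^2) := rfl
  rw [h]
  have h2 := Real.sqrt_le_sqrt
    (le_add_of_nonneg_right (sq_nonneg ‖H‖) : ‖u‖^2 ≤ ‖u‖^2 + ‖H‖^2)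
  rwa [Real.sqrt_sq (norm_nonneg u)] at h2

lemma pnorm_lower2 {m n : ℕ} (u : Em m) (H : Mat n) : ‖H‖ ≤ pnorm (u, H) := by
  have h : pnorm (u, H) = Real.sqrt (‖u‖^2 + ‖H‖^2) := rfl
  rw [h]
  have h2 := Real.sqrt_le_sqrt
    (le_add_of_nonneg_left (sq_nonneg ‖u‖) : ‖H‖^2 ≤ ‖u‖^2 + ‖H‖^2)
  rwa [Real.sqrt_sq (norm_nonneg H)] at h2

lemma pnorm_upper {m n : ℕ} (u : Em m) (H : Mat n) : pnorm (u, H) ≤ ‖u‖ + ‖H‖ := by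
  have h : pnorm (u, H) = Real.sqrt (‖u‖^2 + ‖H‖^2) := rfl
  rw [h]
  have h2 : ‖u‖^2 + ‖H‖^2 ≤ (‖u‖ + ‖H‖)^2 := by
    nlinarith [norm_nonneg u, norm_nonneg H]
  have h3 := Real.sqrt_le_sqrt h2
  rwa [Real.sqrt_sq (by positivity)] at h3

end Aux

/-- At a KKT pair `z̄ ∈ M̃_{p,q}` where the W-SOC and the SRCQ hold, the
map `J(Δ) = (∇g(x̄)Δ, Π₊(Δ))` on the normal space `N_{G(z̄)}M_{p,q}` is positively
homogeneous and satisfies `c₁‖Δ‖ ≤ ‖J(Δ)‖ ≤ c₂‖Δ‖` for some `0 < c₁ < c₂`. -/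
theorem Jmap_positively_homogeneous_and_bounded {m n p q : ℕ}
    (f : Em m → ℝ) (g : Em m → Mat n)
    (hf : ContDiff ℝ 2 f) (hg : ContDiff ℝ 2 g) (hgs : ∀ x, (g x).IsSymm)
    (zbar : Em m × Mat n)
    (hkkt : KKTF f g zbar = 0)
    (hz : zbar ∈ lstratum g p q)
    (hW : WSOC f g zbar) (hS : SRCQ g zbar)
    (P : Mat n) (lam : Fin n → ℝ) (hdec : IsEigDecomp (Gmap g zbar) P lam) :
    (∀ t : ℝ, 0 ≤ t → ∀ Δ : Mat n, memNormal P lam Δ →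
        (gradg g zbar.1 (t • Δ), piPlus (t • Δ)) =
          t • ((gradg g zbar.1 Δ, piPlus Δ) : Em m × Mat n)) ∧
    ∃ c₁ c₂ : ℝ, 0 < c₁ ∧ c₁ < c₂ ∧
      ∀ Δ : Mat n, memNormal P lam Δ →
        c₁ * ‖Δ‖ ≤ pnorm (gradg g zbar.1 Δ, piPlus Δ) ∧
        pnorm (gradg g zbar.1 Δ, piPlus Δ) ≤ c₂ * ‖Δ‖  := by
  constructor
  · intro t ht Δ hΔ
    have h1 : gradg g zbar.1 (t • Δ) = t • gradg g zbar.1 Δ :=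
      (gmapL g zbar.1).map_smul t Δ
    have h2 : piPlus (t • Δ) = t • piPlus Δ := piPlus_smul ht hΔ.1
    rw [h1, h2]
    rfl
  · obtain ⟨c, hc, hlow⟩ := lower_bound_exists g zbar hS P lam hdec
    obtain ⟨C₀, hC₀, hbound⟩ := gradg_bound g zbar.1
    set M : ℝ := 1 + c⁻¹ * C₀ + c⁻¹ with hMdef
    have hM : 0 < M := by positivity
    refine ⟨(2*M)⁻¹, (2*M)⁻¹ + C₀ + 2, by positivity, by linarith, fun Δ hΔ => ?_⟩
    obtain ⟨Δm, hdecomp, hmemp, hmemm, hpsdm, hnorm2⟩ := delta_parts hdec.1 hΔ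
    set gq := ‖gradg g zbar.1 Δ‖ with hgqdef
    set pp := ‖piPlus Δ‖ with hppdef
    have hgq0 : 0 ≤ gq := norm_nonneg _
    have hpp0 : 0 ≤ pp := norm_nonneg _
    have hΔ0 : 0 ≤ ‖Δ‖ := norm_nonneg _
    have hΔm0 : 0 ≤ ‖Δm‖ := norm_nonneg _
    have hp_le : pp ≤ ‖Δ‖ := by nlinarith
    have hsum : ‖Δ‖ ≤ pp + ‖Δm‖ := by nlinarith
    have hm_le : c * ‖Δm‖ ≤ ‖gradg g zbar.1 Δm‖ := hlow Δm hmemm hpsdm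
    have hgm : gradg g zbar.1 Δm = gradg g zbar.1 (piPlus Δ) - gradg g zbar.1 Δ := by
      have hsub : Δm = piPlus Δ - Δ := by
        have h' := hdecomp
        rw [eq_sub_iff_add_eq] at h'
        rw [eq_sub_iff_add_eq, add_comm]
        exact h' 
      rw [hsub]
      exact (gmapL g zbar.1).map_sub _ _
    have hgmnorm : ‖gradg g zbar.1 Δm‖ ≤ C₀ * pp + gq := by
      rw [hgm]
      refine le_trans (norm_sub_le _ _) ?_
      have hb := hbound (piPlus Δ)
      rw [hgqdef, hppdef]
      linarith
    have hΔm_le : c * ‖Δm‖ ≤ C₀ * pp + gq := le_trans hm_le hgmnorm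
    have hci : 0 ≤ c⁻¹ := le_of_lt (inv_pos.mpr hc)
    have hΔm_le2 : ‖Δm‖ ≤ c⁻¹ * (C₀ * pp + gq) := by
      have h1 : c⁻¹ * (c * ‖Δm‖) ≤ c⁻¹ * (C₀ * pp + gq) :=
        mul_le_mul_of_nonneg_left hΔm_le hci
      rwa [← mul_assoc, inv_mul_cancel₀ (ne_of_gt hc), one_mul] at h1
    have hfinal : ‖Δ‖ ≤ M * (pp + gq) := by
      calc ‖Δ‖ ≤ pp + ‖Δm‖ := hsum
        _ ≤ pp + c⁻¹ * (C₀ * pp + gq) := by linarith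
        _ ≤ M * (pp + gq) := by
            rw [hMdef]
            nlinarith [mul_nonneg hci hpp0, mul_nonneg (mul_nonneg hci hC₀) hgq0, hgq0]
    set pn := pnorm (gradg g zbar.1 Δ, piPlus Δ) with hpndef
    have hpn1 : gq ≤ pn := pnorm_lower1 _ _
    have hpn2 : pp ≤ pn := pnorm_lower2 _ _
    have hpn3 : pn ≤ gq + pp := pnorm_upper _ _
    have hpn0 : 0 ≤ pn := le_trans hgq0 hpn1
    constructor
    · rw [inv_mul_le_iff₀ (by positivity)]
      have hstep : M * (pp + gq) ≤ 2 * M * pn := by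
        have := mul_le_mul_of_nonneg_left (add_le_add hpn2 hpn1) (le_of_lt hM)
        nlinarith
      linarith
    · have hb := hbound Δ
      have h1 : pn ≤ C₀ * ‖Δ‖ + ‖Δ‖ := by
        refine le_trans hpn3 ?_
        rw [hgqdef]
        linarith
      have h2 : (0:ℝ) ≤ (2*M)⁻¹ * ‖Δ‖ :=
        mul_nonneg (inv_nonneg.mpr (by positivity)) hΔ0
      have h3 : ((2*M)⁻¹ + C₀ + 2) * ‖Δ‖ = (2*M)⁻¹ * ‖Δ‖ + C₀ * ‖Δ‖ + 2 * ‖Δ‖ := by ring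
      rw [h3]
      linarith
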